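/- arXiv:1303.7245 — 2 statements merged into one kernel-verified Lean document; each statement's English description precedes it below -/
import Mathlib

section
/- For the inner product on polynomials in n variables defined by ⟨p, q⟩ = Σ_m m! p_m q_m (where p = Σ_ℓ p_ℓ x^ℓ, q = Σ_m q_m x^m, and m! = m₁!⋯mₙ! for multi-index m), and for any linear map T ∈ gl(n, ℝ) with adjoint T* with respect to the standard inner product on ℝⁿ, one has ⟨p ∘ T, q⟩ = ⟨p, q ∘ T*⟩ for all polynomials p, q. -/
open MvPolynomial Matrix Finsupp

/-- The inner product ⟨p,q⟩ = Σ_m m! p_m q_m on real polynomials in n variables. -/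
noncomputable def polyInner {n : ℕ} (p q : MvPolynomial (Fin n) ℝ) : ℝ :=
  ∑ m ∈ p.support ∪ q.support,
    (∏ i, ((m i).factorial : ℝ)) * p.coeff m * q.coeff m

/-- Composition of a polynomial with a linear map: x ↦ p (T x). -/
noncomputable def polyComp {n : ℕ} (p : MvPolynomial (Fin n) ℝ)
    (T : Matrix (Fin n) (Fin n) ℝ) : MvPolynomial (Fin n) ℝ :=
  aeval (fun i => ∑ j, C (T i j) * X j) p

variable {n : ℕ}

lemma coeff_pderiv (i : Fin n) (q : MvPolynomial (Fin n) ℝ) (m : Fin n →₀ ℕ) :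
    coeff m (pderiv i q) = (m i + 1 : ℝ) * coeff (m + Finsupp.single i 1) q := by
  induction q using MvPolynomial.induction_on' with
  | monomial s a =>
    rw [pderiv_monomial]
    rcases Nat.eq_zero_or_pos (s i) with h | h
    · have h2 : s ≠ m + Finsupp.single i 1 := by
        rintro rfl; simp at h
      simp [coeff_monomial, h, h2]
    · set t := s - Finsupp.single i 1 with hts
      have ht : t + Finsupp.single i 1 = s := by
        ext j
        rcases eq_or_ne j i with rfl | hj
        · simp [hts, Finsupp.sub_apply, Nat.sub_add_cancel h]
        · simp [hts, Finsupp.sub_apply, Finsupp.single_apply, Ne.symm hj]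
      have hiff : s = m + Finsupp.single i 1 ↔ t = m := by
        constructor
        · rintro rfl
          ext j
          rcases eq_or_ne j i with rfl | hj
          · simp [hts, Finsupp.sub_apply]
          · simp [hts, Finsupp.sub_apply, Finsupp.single_apply, Ne.symm hj]
        · rintro rfl; exact ht.symm
      simp only [coeff_monomial]
      by_cases hm : t = m
      · rw [if_pos hm, if_pos (hiff.mpr hm)]
        subst hm
        have h3 : t i + 1 = s i := by
          conv_rhs => rw [← ht]
          simp
        have : (s i : ℝ) = t i + 1 := by push_cast [← h3]; ring
        rw [this]; ring
      · rw [if_neg hm, if_neg (fun he => hm (hiff.mp he)), mul_zero]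
  | add p q hp hq => simp [hp, hq, mul_add]

lemma polyInner_eq_sum_left (p q : MvPolynomial (Fin n) ℝ) :
    polyInner p q = ∑ m ∈ p.support,
      (∏ i, ((m i).factorial : ℝ)) * p.coeff m * q.coeff m := by
  rw [polyInner]
  symm
  apply Finset.sum_subset Finset.subset_union_left
  intro m _ hm
  simp [MvPolynomial.notMem_support_iff.mp hm]

lemma polyInner_comm (p q : MvPolynomial (Fin n) ℝ) :
    polyInner p q = polyInner q p := by
  rw [polyInner, polyInner, Finset.union_comm]
  exact Finset.sum_congr rfl fun m _ => by ring

lemma polyInner_eq_sum_right (p q : MvPolynomial (Fin n) ℝ) :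
    polyInner p q = ∑ m ∈ q.support,
      (∏ i, ((m i).factorial : ℝ)) * p.coeff m * q.coeff m := by
  rw [polyInner_comm, polyInner_eq_sum_left]
  exact Finset.sum_congr rfl fun m _ => by ring

lemma polyInner_add_right (p q r : MvPolynomial (Fin n) ℝ) :
    polyInner p (q + r) = polyInner p q + polyInner p r := by
  simp only [polyInner_eq_sum_left, coeff_add, mul_add, Finset.sum_add_distrib]

lemma polyInner_add_left (p q r : MvPolynomial (Fin n) ℝ) :
    polyInner (p + q) r = polyInner p r + polyInner q r := by
  rw [polyInner_comm, polyInner_add_right, polyInner_comm r p, polyInner_comm r q]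

lemma polyInner_C_mul_right (c : ℝ) (p q : MvPolynomial (Fin n) ℝ) :
    polyInner p (C c * q) = c * polyInner p q := by
  simp only [polyInner_eq_sum_left, coeff_C_mul, Finset.mul_sum]
  exact Finset.sum_congr rfl fun m _ => by ring

lemma polyInner_C_mul_left (c : ℝ) (p q : MvPolynomial (Fin n) ℝ) :
    polyInner (C c * p) q = c * polyInner p q := by
  rw [polyInner_comm, polyInner_C_mul_right, polyInner_comm]

lemma polyInner_C_left (a : ℝ) (q : MvPolynomial (Fin n) ℝ) :
    polyInner (C a) q = a * q.coeff 0 := by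
  by_cases ha : a = 0
  · simp [ha, polyInner_eq_sum_left]
  · rw [polyInner_eq_sum_left]
    rw [show (C a : MvPolynomial (Fin n) ℝ) = monomial 0 a from by
      rw [MvPolynomial.monomial_zero']]
    rw [support_monomial, if_neg ha]
    simp [coeff_monomial]

lemma polyInner_sum_right {ι : Type*} (s : Finset ι) (p : MvPolynomial (Fin n) ℝ)
    (f : ι → MvPolynomial (Fin n) ℝ) :
    polyInner p (∑ j ∈ s, f j) = ∑ j ∈ s, polyInner p (f j) := by
  induction s using Finset.cons_induction with
  | empty => simp [polyInner_eq_sum_left]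
  | cons j s hj ih => rw [Finset.sum_cons, polyInner_add_right, ih, Finset.sum_cons]

/-- adjointness of multiplication by X i and ∂_i -/
lemma polyInner_X_mul (i : Fin n) (p q : MvPolynomial (Fin n) ℝ) :
    polyInner (X i * p) q = polyInner p (pderiv i q) := by
  rw [polyInner_eq_sum_left, polyInner_eq_sum_left, support_X_mul,
    Finset.sum_map]
  apply Finset.sum_congr rfl
  intro m _
  rw [addLeftEmbedding_apply, coeff_X_mul, coeff_pderiv]
  have hfac : (∏ j, (((Finsupp.single i 1 + m : Fin n →₀ ℕ) j).factorial : ℝ))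
      = ((m i : ℝ) + 1) * ∏ j, ((m j).factorial : ℝ) := by
    rw [← Finset.mul_prod_erase _ _ (Finset.mem_univ i),
        ← Finset.mul_prod_erase _ (fun j => ((m j).factorial : ℝ)) (Finset.mem_univ i)]
    have h1 : (Finsupp.single i 1 + m : Fin n →₀ ℕ) i = m i + 1 := by
      simp [Finsupp.add_apply, add_comm]
    have h2 : ∀ j ∈ Finset.univ.erase i,
        (((Finsupp.single i 1 + m : Fin n →₀ ℕ) j).factorial : ℝ) = ((m j).factorial : ℝ) := by
      intro j hj
      have : j ≠ i := (Finset.mem_erase.mp hj).1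
      simp [Finsupp.single_apply, Ne.symm this]
    rw [Finset.prod_congr rfl h2, h1]
    push_cast [Nat.factorial_succ]
    ring
  rw [hfac]
  have hq : coeff (m + Finsupp.single i 1) q = coeff (Finsupp.single i 1 + m) q := by
    rw [add_comm]
  rw [hq]
  ring

/-- chain rule for composition with linear forms -/
lemma pderiv_polyComp (i : Fin n) (q : MvPolynomial (Fin n) ℝ)
    (S : Matrix (Fin n) (Fin n) ℝ) :
    pderiv i (polyComp q S) = ∑ j, C (S j i) * polyComp (pderiv j q) S := by
  induction q using MvPolynomial.induction_on with
  | C a => simp [polyComp]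
  | add p q hp hq =>
    simp only [polyComp, map_add] at *
    rw [hp, hq, ← Finset.sum_add_distrib]
    exact Finset.sum_congr rfl fun j _ => by ring
  | mul_X p k hp =>
    simp only [polyComp] at *
    have hderiv : (pderiv i) (∑ j, C (S k j) * X j : MvPolynomial (Fin n) ℝ)
        = C (S k i) := by
      rw [map_sum, Finset.sum_eq_single i]
      · simp
      · intro j _ hj
        simp [pderiv_X_of_ne hj]
      · simp
    rw [_root_.map_mul, aeval_X, pderiv_mul, hp, hderiv]
    have expand : ∀ j : Fin n,
        (aeval fun i => ∑ j, C (S i j) * X j) ((pderiv j) (p * X k))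
        = (aeval fun i => ∑ j, C (S i j) * X j) ((pderiv j) p) * (∑ l, C (S k l) * X l)
          + (if j = k then (aeval fun i => ∑ j, C (S i j) * X j) p else 0) := by
      intro j
      rw [pderiv_mul, map_add, _root_.map_mul, aeval_X]
      congr 1
      rcases eq_or_ne j k with rfl | hjk
      · simp
      · simp [pderiv_X_of_ne (Ne.symm hjk), hjk]
    simp only [expand, mul_add, Finset.sum_add_distrib]
    congr 1
    · rw [Finset.sum_mul]
      exact Finset.sum_congr rfl fun j _ => by ring
    · simp only [mul_ite, mul_zero]
      rw [Finset.sum_ite_eq' Finset.univ k]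
      simp [mul_comm]

lemma coeff_zero_polyComp (q : MvPolynomial (Fin n) ℝ) (S : Matrix (Fin n) (Fin n) ℝ) :
    coeff 0 (polyComp q S) = coeff 0 q := by
  have h : constantCoeff (polyComp q S) = constantCoeff q := by
    induction q using MvPolynomial.induction_on with
    | C a => simp [polyComp]
    | add p q hp hq =>
      rw [show polyComp (p + q) S = polyComp p S + polyComp q S from map_add _ _ _,
        map_add, map_add, hp, hq]
    | mul_X p k hp =>
      rw [show polyComp (p * X k) S = polyComp p S * (∑ j, C (S k j) * X j) from by
        simp [polyComp], _root_.map_mul, _root_.map_mul]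
      have h0 : constantCoeff (∑ j, C (S k j) * X j : MvPolynomial (Fin n) ℝ) = 0 := by
        simp
      simp [h0]
  simpa [MvPolynomial.constantCoeff_eq] using h

theorem inner_comp_adjoint {n : ℕ} (T : Matrix (Fin n) (Fin n) ℝ)
    (p q : MvPolynomial (Fin n) ℝ) :
    polyInner (polyComp p T) q = polyInner p (polyComp q Tᵀ) := by
  induction p using MvPolynomial.induction_on generalizing q with
  | C a =>
    rw [show polyComp (C a) T = C a by simp [polyComp]]
    rw [polyInner_C_left, polyInner_C_left, coeff_zero_polyComp]
  | add p r hp hr =>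
    rw [show polyComp (p + r) T = polyComp p T + polyComp r T by simp [polyComp]]
    rw [polyInner_add_left, polyInner_add_left, hp, hr]
  | mul_X p i hp =>
    rw [show polyComp (p * X i) T = polyComp p T * ∑ j, C (T i j) * X j by
      simp [polyComp]]
    have step : polyInner (polyComp p T * ∑ j, C (T i j) * X j) q
        = ∑ j, T i j * polyInner (polyComp p T) (pderiv j q) := by
      rw [Finset.mul_sum]
      rw [show ∀ f : Fin n → MvPolynomial (Fin n) ℝ, polyInner (∑ j, f j) q
          = ∑ j, polyInner (f j) q from fun f => by
        rw [polyInner_comm, polyInner_sum_right]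
        exact Finset.sum_congr rfl fun j _ => polyInner_comm _ _]
      apply Finset.sum_congr rfl
      intro j _
      rw [show polyComp p T * (C (T i j) * X j) = C (T i j) * (X j * polyComp p T) by ring,
        polyInner_C_mul_left, polyInner_X_mul]
    rw [step]
    have step2 : ∀ j, polyInner (polyComp p T) (pderiv j q)
        = polyInner p (polyComp (pderiv j q) Tᵀ) := fun j => hp _
    simp only [step2]
    have step3 : polyInner (p * X i) (polyComp q Tᵀ)
        = polyInner p (pderiv i (polyComp q Tᵀ)) := by
      rw [mul_comm, polyInner_X_mul]
    rw [step3, pderiv_polyComp]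
    rw [polyInner_sum_right]
    apply Finset.sum_congr rfl
    intro j _
    rw [polyInner_C_mul_right, Matrix.transpose_apply]
end

section
/- For the vector field V = Σ_{j=1}^{n} x_j ∂/∂x_{j+1} on ℝ^{n+1} (with x_{n+1} := u and convention x₀ = 0), each polynomial ℓ_i(x) = ½ x_i² + Σ_{k=1}^{K} (−1)^k x_{i−k} x_{i+k} is a first integral of V, for 2 ≤ i ≤ r+1, where K is chosen so all indices i−k ≥ 1 and i+k ≤ n+1 (i.e., K = min(i−1, n+1−i)), r = n/2 if n even and r = (n−1)/2 if n odd. -/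
open MvPolynomial

/-- The vector field V = Σ_{j=1}^{n} x_j ∂/∂x_{j+1} of the characteristic system
of the Brunovský form, acting on polynomials in the variables x₁,…,xₙ,u
(with u = x_{n+1}), as a differential operator. -/
noncomputable def Vop (n : ℕ) (p : MvPolynomial ℕ ℝ) : MvPolynomial ℕ ℝ :=
  ∑ j ∈ Finset.Icc 1 n, X j * pderiv (j + 1) p

/-- ℓ_i = ½ x_i² + Σ_{k=1}^{K} (−1)^k x_{i−k} x_{i+k}, K = min(i−1, n+1−i). -/
noncomputable def ell (n i : ℕ) : MvPolynomial ℕ ℝ :=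
  C (1/2 : ℝ) * X i ^ 2 +
    ∑ k ∈ Finset.Icc 1 (min (i - 1) (n + 1 - i)),
      C ((-1 : ℝ) ^ k) * X (i - k) * X (i + k)

theorem pd_ell (i m : ℕ) :
    pderiv m (C (1/2 : ℝ) * X i ^ 2 +
      ∑ k ∈ Finset.Icc 1 (i-1), C ((-1:ℝ)^k) * X (i-k) * X (i+k)) =
    (if i = m then X i else 0) +
      ∑ k ∈ Finset.Icc 1 (i-1), C ((-1:ℝ)^k) *
        ((if i-k = m then X (i+k) else 0) + (if i+k = m then (X (i-k) : MvPolynomial ℕ ℝ) else 0)) := by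
  rw [map_add, map_sum]
  congr 1
  · rw [pderiv_mul, pderiv_C, sq, pderiv_mul, pderiv_X, Pi.single_apply]
    split_ifs
    · simp only [zero_mul, zero_add, mul_one, one_mul]
      rw [← two_mul, show (2 : MvPolynomial ℕ ℝ) = C 2 from (map_ofNat C 2).symm,
        ← mul_assoc, ← C_mul]
      norm_num
    · simp
  · refine Finset.sum_congr rfl fun k hk => ?_
    rw [pderiv_mul, pderiv_mul, pderiv_C, pderiv_X, pderiv_X, Pi.single_apply, Pi.single_apply]
    split_ifs <;> simp <;> ring

theorem ell_i_first_integral (n i : ℕ) (hi₁ : 2 ≤ i) (hi₂ : i ≤ n / 2 + 1) :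
    Vop n (ell n i) = 0 := by
  have h2i : 2 * i ≤ n + 2 := by omega
  have hK : min (i - 1) (n + 1 - i) = i - 1 := by omega
  set T : ℕ → MvPolynomial ℕ ℝ := fun k => C ((-1:ℝ)^k) * (X (i-1-k) * X (i+k)) with hT
  rw [Vop, ell, hK]
  simp only [pd_ell]
  simp only [mul_add, Finset.sum_add_distrib, Finset.mul_sum]
  rw [Finset.sum_comm]
  conv_lhs => arg 2; arg 2; rw [Finset.sum_comm]
  have hA : ∑ x ∈ Finset.Icc 1 n, (X x * if i = x + 1 then (X i : MvPolynomial ℕ ℝ) else 0)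
      = X (i-1) * X i := by
    rw [Finset.sum_eq_single (i-1)]
    · rw [if_pos (by omega)]
    · intro x hx hne
      rw [if_neg (by omega), mul_zero]
    · intro h
      exact absurd (Finset.mem_Icc.mpr ⟨by omega, by omega⟩) h
  have hB1 : ∀ k ∈ Finset.Icc 1 (i-1),
      (∑ x ∈ Finset.Icc 1 n, X x * (C ((-1:ℝ)^k) * if i - k = x + 1 then X (i+k) else 0))
      = if k ≤ i-2 then T k else 0 := by
    intro k hk
    rw [Finset.mem_Icc] at hk
    by_cases hc : k ≤ i-2
    · rw [if_pos hc, Finset.sum_eq_single (i-k-1)]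
      · rw [if_pos (by omega), hT, show i-k-1 = i-1-k from by omega]
        ring
      · intro x hx hne
        rw [Finset.mem_Icc] at hx
        rw [if_neg (by omega), mul_zero, mul_zero]
      · intro h
        exact absurd (Finset.mem_Icc.mpr ⟨by omega, by omega⟩) h
    · rw [if_neg hc]
      refine Finset.sum_eq_zero fun x hx => ?_
      rw [Finset.mem_Icc] at hx
      rw [if_neg (by omega), mul_zero, mul_zero]
  have hB2 : ∀ k ∈ Finset.Icc 1 (i-1),
      (∑ x ∈ Finset.Icc 1 n, X x * (C ((-1:ℝ)^k) * if i + k = x + 1 then X (i-k) else 0))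
      = -(T (k-1)) := by
    intro k hk
    rw [Finset.mem_Icc] at hk
    rw [Finset.sum_eq_single (i+k-1)]
    · rw [if_pos (by omega)]
      simp only [hT]
      rw [show i-1-(k-1) = i-k from by omega, show i+(k-1) = i+k-1 from by omega,
        show ((-1:ℝ)^k) = -((-1:ℝ)^(k-1)) from by
          have h := pow_succ (-1:ℝ) (k-1)
          rw [show k-1+1 = k from by omega] at h
          rw [h]; ring,
        map_neg]
      ring
    · intro x hx hne
      rw [if_neg (by omega), mul_zero, mul_zero]
    · intro h
      exact absurd (Finset.mem_Icc.mpr ⟨by omega, by omega⟩) h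
  rw [hA, Finset.sum_congr rfl hB1, Finset.sum_congr rfl hB2]
  have e1 : ∑ k ∈ Finset.Icc 1 (i-1), (if k ≤ i-2 then T k else 0)
      = ∑ k ∈ Finset.Icc 1 (i-2), T k := by
    rw [← Finset.sum_subset (Finset.Icc_subset_Icc_right (by omega : i-2 ≤ i-1))
      (fun x hx hx' => by
        rw [Finset.mem_Icc] at hx; rw [Finset.mem_Icc] at hx'
        rw [if_neg (by omega)])]
    exact Finset.sum_congr rfl fun k hk => by
      rw [Finset.mem_Icc] at hk; rw [if_pos hk.2]
  have e2' : ∑ k ∈ Finset.Icc 1 (i-1), T (k-1) = T 0 + ∑ k ∈ Finset.Icc 1 (i-2), T k := by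
    have hre : ∑ k ∈ Finset.Icc 1 (i-1), T (k-1) = ∑ m ∈ Finset.Icc 0 (i-2), T m := by
      refine Finset.sum_nbij' (fun k => k - 1) (fun m => m + 1) ?_ ?_ ?_ ?_ ?_
      · intro a ha; rw [Finset.mem_Icc] at ha; beta_reduce; rw [Finset.mem_Icc]; omega
      · intro a ha; rw [Finset.mem_Icc] at ha; beta_reduce; rw [Finset.mem_Icc]; omega
      · intro a ha; rw [Finset.mem_Icc] at ha; beta_reduce; omega
      · intro a ha; rw [Finset.mem_Icc] at ha; beta_reduce; omega
      · intro a ha; rfl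
    rw [hre, show Finset.Icc 0 (i-2) = insert 0 (Finset.Icc 1 (i-2)) from by
      ext x; simp only [Finset.mem_Icc, Finset.mem_insert]; omega,
      Finset.sum_insert (by simp)]
  have e2 : ∑ k ∈ Finset.Icc 1 (i-1), -(T (k-1)) = -(T 0 + ∑ k ∈ Finset.Icc 1 (i-2), T k) := by
    rw [← e2']
    rw [Finset.sum_neg_distrib]
  rw [e1, e2]
  have hT0 : T 0 = X (i-1) * X i := by simp [hT]
  rw [hT0]
  ring
end
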